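/- Let r ≥ 3 and let G be a linear r-uniform hypergraph that is {C_{1r}, C*}-free. Suppose e = {u_1,...,u_r} is an edge with d(u_1) ≥ (r-1)^2 + 1, d(u_2) ≥ (r-1)^2 + 1, and d(u_i) ≥ (r-1)^2 for 3 ≤ i ≤ r. Then d(u_1) = d(u_2) = (r-1)^2 + 1. -/

import Mathlib

open Finset

/-- A linear `r`-uniform hypergraph: every edge has `r` vertices and
any two distinct edges intersect in at most one vertex. -/
def IsLinear {V : Type*} [DecidableEq V] (r : ℕ) (E : Finset (Finset V)) : Prop :=
  (∀ e ∈ E, e.card = r) ∧ ∀ e ∈ E, ∀ f ∈ E, e ≠ f → (e ∩ f).card ≤ 1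

/-- The degree of a vertex: the number of edges containing it. -/
def degree {V : Type*} [DecidableEq V] (E : Finset (Finset V)) (v : V) : ℕ :=
  (E.filter (fun e => v ∈ e)).card

/-- `E` contains a copy of the `r`-crown `C_{1r}`: `r` pairwise disjoint edges
together with one edge meeting each of them in exactly one vertex. -/
def HasCrown {V : Type*} [DecidableEq V] (r : ℕ) (E : Finset (Finset V)) : Prop :=
  ∃ e ∈ E, ∃ f : Fin r → Finset V,
    (∀ i, f i ∈ E) ∧ (∀ i, f i ≠ e) ∧
    (∀ i j, i ≠ j → f i ∩ f j = ∅) ∧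
    (∀ i, (e ∩ f i).card = 1)

/-- `E` contains a copy of `C*`: `r-2` edges pairwise meeting exactly in a common
vertex `v`, two further edges disjoint from each other and from all the others,
and one edge meeting each of the `r` edges in exactly one vertex, avoiding `v`. -/
def HasCStar {V : Type*} [DecidableEq V] (r : ℕ) (E : Finset (Finset V)) : Prop :=
  ∃ v : V, ∃ e ∈ E, ∃ f : Fin r → Finset V,
    (∀ i, f i ∈ E) ∧ (∀ i, f i ≠ e) ∧
    (∀ i : Fin r, (i : ℕ) < r - 2 → v ∈ f i) ∧
    (∀ i j : Fin r, (i : ℕ) < r - 2 → (j : ℕ) < r - 2 → i ≠ j → f i ∩ f j = {v}) ∧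
    (∀ i j : Fin r, r - 2 ≤ (i : ℕ) → i ≠ j → f i ∩ f j = ∅) ∧
    (∀ i, (e ∩ f i).card = 1) ∧ v ∉ e

section Aux
variable {V : Type*} [DecidableEq V] [Fintype V]
variable {V : Type*} [DecidableEq V]

/-- single greedy pick -/
lemma pick_lemma (r : ℕ) (E : Finset (Finset V)) (hlin : IsLinear r E)
    (e : Finset V) (he : e ∈ E) (x : V) (hx : x ∈ e)
    (B : Finset (Finset V))
    (hB : ∀ b ∈ B, b.card = r ∧ x ∉ b ∧ ∃ w ∈ b, w ∈ e ∧ w ≠ x)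
    (hdeg : B.card * (r - 1) + 2 ≤ degree E x) :
    ∃ f ∈ E, f ≠ e ∧ x ∈ f ∧ ∀ b ∈ B, f ∩ b = ∅ := by
  classical
  set C : Finset (Finset V) := (E.filter (fun f => x ∈ f)).erase e with hC
  have heC : e ∈ E.filter (fun f => x ∈ f) := by simp [he, hx]
  have hCcard : C.card = degree E x - 1 := by
    rw [hC, Finset.card_erase_of_mem heC]; rfl
  -- each blocking edge kills at most r-1 candidates
  have hkill : ∀ b ∈ B, (C.filter (fun f => (f ∩ b).Nonempty)).card ≤ r - 1 := by
    intro b hb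
    obtain ⟨hbcard, hxb, w₀, hw₀b, hw₀e, hw₀x⟩ := hB b hb
    have hsub : C.filter (fun f => (f ∩ b).Nonempty) ⊆
        (b.erase w₀).biUnion (fun w => E.filter (fun f => x ∈ f ∧ w ∈ f)) := by
      intro f hf
      simp only [Finset.mem_filter, hC, Finset.mem_erase] at hf
      obtain ⟨⟨hfe, hfE, hxf⟩, w, hw⟩ := hf
      rw [Finset.mem_inter] at hw
      have hwne : w ≠ w₀ := by
        rintro rfl
        have h2 : ({x, w} : Finset V) ⊆ f ∩ e := by
          intro y hy
          simp only [Finset.mem_insert, Finset.mem_singleton] at hy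
          rcases hy with rfl | rfl <;> simp [Finset.mem_inter, hxf, hx, hw.1, hw₀e]
        have := hlin.2 f hfE e he hfe
        have h3 : ({x, w} : Finset V).card = 2 := Finset.card_pair (Ne.symm hw₀x)
        have := Finset.card_le_card h2
        omega
      exact Finset.mem_biUnion.2 ⟨w, Finset.mem_erase.2 ⟨hwne, hw.2⟩,
        Finset.mem_filter.2 ⟨hfE, hxf, hw.1⟩⟩
    have hone : ∀ w ∈ b.erase w₀, (E.filter (fun f => x ∈ f ∧ w ∈ f)).card ≤ 1 := by
      intro w hw
      apply Finset.card_le_one.2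
      intro f1 h1 f2 h2
      simp only [Finset.mem_filter] at h1 h2
      by_contra hne
      have h2' : ({x, w} : Finset V) ⊆ f1 ∩ f2 := by
        intro y hy
        simp only [Finset.mem_insert, Finset.mem_singleton] at hy
        rcases hy with rfl | rfl <;> simp [Finset.mem_inter, h1.2.1, h1.2.2, h2.2.1, h2.2.2]
      have hxw : x ≠ w := fun h => hxb (h ▸ (Finset.mem_erase.1 hw).2)
      have := hlin.2 f1 h1.1 f2 h2.1 hne
      have h3 : ({x, w} : Finset V).card = 2 := Finset.card_pair hxw
      have := Finset.card_le_card h2'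
      omega
    calc (C.filter (fun f => (f ∩ b).Nonempty)).card
        ≤ ((b.erase w₀).biUnion (fun w => E.filter (fun f => x ∈ f ∧ w ∈ f))).card :=
          Finset.card_le_card hsub
      _ ≤ ∑ w ∈ b.erase w₀, (E.filter (fun f => x ∈ f ∧ w ∈ f)).card :=
          Finset.card_biUnion_le
      _ ≤ ∑ _w ∈ b.erase w₀, 1 := Finset.sum_le_sum hone
      _ = (b.erase w₀).card := by simp
      _ = r - 1 := by rw [Finset.card_erase_of_mem hw₀b, hbcard]
  -- a good candidate exists
  by_contra hcon
  push_neg at hcon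
  have hCbad : C ⊆ B.biUnion (fun b => C.filter (fun f => (f ∩ b).Nonempty)) := by
    intro f hf
    simp only [hC, Finset.mem_erase, Finset.mem_filter] at hf
    obtain ⟨hfe, hfE, hxf⟩ := hf
    obtain ⟨b, hb, hfb⟩ := hcon f hfE hfe hxf
    exact Finset.mem_biUnion.2 ⟨b, hb, Finset.mem_filter.2
      ⟨by simp [hC, Finset.mem_erase, Finset.mem_filter, hfe, hfE, hxf],
       hfb⟩⟩
  have : C.card ≤ B.card * (r - 1) := by
    calc C.card ≤ (B.biUnion (fun b => C.filter (fun f => (f ∩ b).Nonempty))).card :=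
          Finset.card_le_card hCbad
      _ ≤ ∑ b ∈ B, (C.filter (fun f => (f ∩ b).Nonempty)).card := Finset.card_biUnion_le
      _ ≤ ∑ _b ∈ B, (r - 1) := Finset.sum_le_sum hkill
      _ = B.card * (r - 1) := by simp [Finset.sum_const, mul_comm]
  omega
variable {V : Type*} [DecidableEq V]


lemma multi_pick (r : ℕ) (E : Finset (Finset V)) (hlin : IsLinear r E)
    (e : Finset V) (he : e ∈ E) (u : Fin r → V)
    (hinj : Function.Injective u) (hmem : ∀ i, u i ∈ e)
    (s : Finset (Fin r))
    (hdeg : ∀ i ∈ s, (s.card - 1) * (r - 1) + 2 ≤ degree E (u i)) :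
    ∃ f : Fin r → Finset V, (∀ i ∈ s, f i ∈ E ∧ f i ≠ e ∧ u i ∈ f i) ∧
      ∀ i ∈ s, ∀ j ∈ s, i ≠ j → f i ∩ f j = ∅ := by
  classical
  induction s using Finset.strongInduction with
  | _ s ih =>
    rcases s.eq_empty_or_nonempty with rfl | ⟨i, hi⟩
    · exact ⟨fun _ => ∅, by simp, by simp⟩
    · set s' := s.erase i with hs'
      have hss : s' ⊂ s := Finset.erase_ssubset hi
      have hcard' : s'.card = s.card - 1 := Finset.card_erase_of_mem hi
      obtain ⟨f, hf1, hf2⟩ := ih s' hss (fun j hj => by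
        have := hdeg j (Finset.mem_of_mem_erase hj)
        have h1 : (s'.card - 1) * (r - 1) ≤ (s.card - 1) * (r - 1) :=
          Nat.mul_le_mul_right _ (by omega)
        omega)
      -- properties of chosen edges
      have hfinter : ∀ j ∈ s', f j ∩ e = {u j} := by
        intro j hj
        obtain ⟨hfE, hfe, huf⟩ := hf1 j hj
        have h1 := hlin.2 (f j) hfE e he hfe
        have h2 : u j ∈ f j ∩ e := Finset.mem_inter.2 ⟨huf, hmem j⟩
        have h3 : 1 ≤ (f j ∩ e).card := Finset.card_pos.2 ⟨_, h2⟩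
        have h4 : (f j ∩ e).card = 1 := le_antisymm h1 h3
        obtain ⟨a, ha⟩ := Finset.card_eq_one.1 h4
        rw [ha] at h2 ⊢
        simp at h2; rw [h2]
      obtain ⟨g, hgE, hge, hug, hgdisj⟩ := pick_lemma r E hlin e he (u i) (hmem i)
        (s'.image f)
        (by
          intro b hb
          obtain ⟨j, hj, rfl⟩ := Finset.mem_image.1 hb
          obtain ⟨hfE, hfe, huf⟩ := hf1 j hj
          have hji : j ≠ i := (Finset.mem_erase.1 hj).1
          refine ⟨hlin.1 _ hfE, ?_, u j, huf, hmem j, fun h => hji (hinj h)⟩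
          intro hib
          have : u i ∈ f j ∩ e := Finset.mem_inter.2 ⟨hib, hmem i⟩
          rw [hfinter j hj] at this
          simp at this
          exact hji (hinj this.symm))
        (by
          have h1 : (s'.image f).card ≤ s'.card := Finset.card_image_le
          have h2 := hdeg i hi
          have h3 : (s'.image f).card * (r - 1) ≤ (s.card - 1) * (r - 1) :=
            Nat.mul_le_mul_right _ (by omega)
          omega)
      refine ⟨Function.update f i g, ?_, ?_⟩
      · intro j hj
        rcases eq_or_ne j i with h | hji
        · subst h; simp [Function.update_self, hgE, hge, hug]
        · rw [Function.update_of_ne hji]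
          exact hf1 j (Finset.mem_erase.2 ⟨hji, hj⟩)
      · intro j hj k hk hjk
        rcases eq_or_ne j i with h | hji <;> rcases eq_or_ne k i with h' | hki
        · subst h; subst h'; exact absurd rfl hjk
        all_goals try subst h
        all_goals try subst h'
        · rw [Function.update_self, Function.update_of_ne hki]
          exact hgdisj _ (Finset.mem_image_of_mem f (Finset.mem_erase.2 ⟨hki, hk⟩))
        · rw [Function.update_self, Function.update_of_ne hji, Finset.inter_comm]
          exact hgdisj _ (Finset.mem_image_of_mem f (Finset.mem_erase.2 ⟨hji, hj⟩))
        · rw [Function.update_of_ne hji, Function.update_of_ne hki]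
          exact hf2 j (Finset.mem_erase.2 ⟨hji, hj⟩) k (Finset.mem_erase.2 ⟨hki, hk⟩) hjk

lemma degree_bound (r : ℕ) (hr : 3 ≤ r) (E : Finset (Finset V)) (hlin : IsLinear r E)
    (hfree₁ : ¬ HasCrown r E)
    (e : Finset V) (he : e ∈ E) (u : Fin r → V)
    (hinj : Function.Injective u) (hmem : ∀ i, u i ∈ e)
    (hall : ∀ i, (r - 1) ^ 2 ≤ degree E (u i)) (i0 : Fin r) :
    degree E (u i0) ≤ (r - 1) ^ 2 + 1 := by
  classical
  by_contra hcon
  push_neg at hcon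
  set s : Finset (Fin r) := Finset.univ.erase i0 with hs
  have hscard : s.card = r - 1 := by
    rw [hs, Finset.card_erase_of_mem (Finset.mem_univ _), Finset.card_univ, Fintype.card_fin]
  obtain ⟨f, hf1, hf2⟩ := multi_pick r E hlin e he u hinj hmem s (fun j hj => by
    have := hall j
    have h1 : (s.card - 1) * (r - 1) + (r - 1) = (r - 1) ^ 2 := by
      rw [hscard, pow_two]
      have hm : (r - 1 - 1) + 1 = r - 1 := by omega
      calc (r-1-1)*(r-1) + (r-1) = ((r-1-1)+1)*(r-1) := by rw [Nat.succ_mul]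
        _ = (r-1)*(r-1) := by rw [hm]
    omega)
  have hfinter : ∀ j ∈ s, f j ∩ e = {u j} := by
    intro j hj
    obtain ⟨hfE, hfe, huf⟩ := hf1 j hj
    have h1 := hlin.2 (f j) hfE e he hfe
    have h2 : u j ∈ f j ∩ e := Finset.mem_inter.2 ⟨huf, hmem j⟩
    have h3 : 1 ≤ (f j ∩ e).card := Finset.card_pos.2 ⟨_, h2⟩
    have h4 : (f j ∩ e).card = 1 := le_antisymm h1 h3
    obtain ⟨a, ha⟩ := Finset.card_eq_one.1 h4
    rw [ha] at h2 ⊢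
    simp at h2; rw [h2]
  obtain ⟨g, hgE, hge, hug, hgdisj⟩ := pick_lemma r E hlin e he (u i0) (hmem i0)
    (s.image f)
    (by
      intro b hb
      obtain ⟨j, hj, rfl⟩ := Finset.mem_image.1 hb
      obtain ⟨hfE, hfe, huf⟩ := hf1 j hj
      have hji : j ≠ i0 := (Finset.mem_erase.1 hj).1
      refine ⟨hlin.1 _ hfE, ?_, u j, huf, hmem j, fun h => hji (hinj h)⟩
      intro hib
      have : u i0 ∈ f j ∩ e := Finset.mem_inter.2 ⟨hib, hmem i0⟩
      rw [hfinter j hj] at this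
      simp at this
      exact hji (hinj this.symm))
    (by
      have h1 : (s.image f).card ≤ s.card := Finset.card_image_le
      have h3 : (s.image f).card * (r - 1) ≤ (r - 1) * (r - 1) :=
        Nat.mul_le_mul_right _ (by omega)
      have : (r - 1) * (r - 1) = (r - 1) ^ 2 := (pow_two _).symm
      omega)
  apply hfree₁
  refine ⟨e, he, Function.update f i0 g, ?_, ?_, ?_, ?_⟩
  · intro j
    rcases eq_or_ne j i0 with h | hji
    · subst h; simpa using hgE
    · rw [Function.update_of_ne hji]
      exact (hf1 j (Finset.mem_erase.2 ⟨hji, Finset.mem_univ _⟩)).1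
  · intro j
    rcases eq_or_ne j i0 with h | hji
    · subst h; simpa using hge
    · rw [Function.update_of_ne hji]
      exact (hf1 j (Finset.mem_erase.2 ⟨hji, Finset.mem_univ _⟩)).2.1
  · intro j k hjk
    rcases eq_or_ne j i0 with h | hji <;> rcases eq_or_ne k i0 with h' | hki
    · subst h; subst h'; exact absurd rfl hjk
    all_goals try subst h
    all_goals try subst h'
    · rw [Function.update_self, Function.update_of_ne hki]
      exact hgdisj _ (Finset.mem_image_of_mem f (Finset.mem_erase.2 ⟨hki, Finset.mem_univ _⟩))
    · rw [Function.update_self, Function.update_of_ne hji, Finset.inter_comm]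
      exact hgdisj _ (Finset.mem_image_of_mem f (Finset.mem_erase.2 ⟨hji, Finset.mem_univ _⟩))
    · rw [Function.update_of_ne hji, Function.update_of_ne hki]
      exact hf2 j (Finset.mem_erase.2 ⟨hji, Finset.mem_univ _⟩)
        k (Finset.mem_erase.2 ⟨hki, Finset.mem_univ _⟩) hjk
  · intro j
    have key : ∀ h : Finset V, h ∈ E → h ≠ e → u j ∈ h → (e ∩ h).card = 1 := by
      intro h hE hne huh
      have h1 := hlin.2 e he h hE (Ne.symm hne)
      have h2 : u j ∈ e ∩ h := Finset.mem_inter.2 ⟨hmem j, huh⟩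
      have h3 : 1 ≤ (e ∩ h).card := Finset.card_pos.2 ⟨_, h2⟩
      omega
    rcases eq_or_ne j i0 with h | hji
    · subst h; rw [Function.update_self]; exact key g hgE hge hug
    · rw [Function.update_of_ne hji]
      obtain ⟨hfE, hfe, huf⟩ := hf1 j (Finset.mem_erase.2 ⟨hji, Finset.mem_univ _⟩)
      exact key _ hfE hfe huf

end Aux

/-- If `e = {u_1,…,u_r}` is an edge of a `{C_{1r}, C*}`-free linear `r`-graph with
`d(u_1), d(u_2) ≥ (r-1)^2 + 1` and `d(u_i) ≥ (r-1)^2` for `i ≥ 3`, then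
`d(u_1) = d(u_2) = (r-1)^2 + 1`. -/
theorem degree_exact {V : Type*} [DecidableEq V] [Fintype V]
    (r : ℕ) (hr : 3 ≤ r) (E : Finset (Finset V)) (hlin : IsLinear r E)
    (hfree₁ : ¬ HasCrown r E) (hfree₂ : ¬ HasCStar r E)
    (e : Finset V) (he : e ∈ E) (u : Fin r → V)
    (hinj : Function.Injective u) (hmem : ∀ i, u i ∈ e)
    (hd1 : (r - 1) ^ 2 + 1 ≤ degree E (u ⟨0, by omega⟩))
    (hd2 : (r - 1) ^ 2 + 1 ≤ degree E (u ⟨1, by omega⟩))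
    (hdi : ∀ i : Fin r, 2 ≤ (i : ℕ) → (r - 1) ^ 2 ≤ degree E (u i)) :
    degree E (u ⟨0, by omega⟩) = (r - 1) ^ 2 + 1 ∧
      degree E (u ⟨1, by omega⟩) = (r - 1) ^ 2 + 1 := by
  have h0 := degree_bound r hr E hlin hfree₁ e he u hinj hmem
    (fun i => by
      rcases Nat.lt_or_ge (i : ℕ) 2 with h | h
      · interval_cases h' : (i : ℕ)
        · have : i = ⟨0, by omega⟩ := Fin.ext h'
          rw [this]; omega
        · have : i = ⟨1, by omega⟩ := Fin.ext h'
          rw [this]; omega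
      · exact hdi i h) 
  exact ⟨le_antisymm (h0 _) hd1, le_antisymm (h0 _) hd2⟩
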